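/- For every finite abelian group H and every subset S ⊆ H, the Haar graph H(H,S) is a Cayley graph. -/

import Mathlib

/-- The Haar graph of a group `H` with connection set `S ⊆ H`: the bipartite
graph on two copies of `H` (indexed by `Bool`; `false` is the copy `H₀`,
`true` is the copy `H₁`) in which `h₀` is adjacent to `(s*h)₁` for `s ∈ S`. -/
def haarGraph {H : Type*} [Group H] (S : Set H) : SimpleGraph (Bool × H) where
  Adj u v := (u.1 = false ∧ v.1 = true ∧ v.2 * u.2⁻¹ ∈ S) ∨
             (u.1 = true ∧ v.1 = false ∧ u.2 * v.2⁻¹ ∈ S)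
  symm := by
    refine ⟨?_⟩
    rintro ⟨i, x⟩ ⟨j, y⟩ (⟨h1, h2, h3⟩ | ⟨h1, h2, h3⟩)
    · exact Or.inr ⟨h2, h1, h3⟩
    · exact Or.inl ⟨h2, h1, h3⟩
  loopless := by
    refine ⟨?_⟩
    rintro ⟨i, x⟩ (⟨h1, h2, _⟩ | ⟨h1, h2, _⟩) <;> simp_all

/-- A graph is a Cayley graph if its automorphism group contains a subgroup
acting regularly on the vertex set. -/
def IsCayleyGraph {V : Type*} (Γ : SimpleGraph V) : Prop :=
  ∃ G : Subgroup (Equiv.Perm V),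
    (∀ g ∈ G, ∀ u v : V, Γ.Adj (g u) (g v) ↔ Γ.Adj u v) ∧
    (∀ u v : V, ∃! g : Equiv.Perm V, g ∈ G ∧ g u = v)

/-- A graph is vertex-transitive if its automorphism group acts transitively
on the vertices. -/
def IsVertexTransitive {V : Type*} (Γ : SimpleGraph V) : Prop :=
  ∀ u v : V, ∃ f : Γ ≃g Γ, f u = v

/-- A group is inner abelian if it is non-abelian but every proper subgroup
is abelian. -/
def IsInnerAbelian (H : Type*) [Group H] : Prop :=
  (¬ ∀ a b : H, a * b = b * a) ∧
    ∀ K : Subgroup H, K ≠ ⊤ → ∀ a b : H, a ∈ K → b ∈ K → a * b = b * a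

section
variable {H : Type*} [CommGroup H]

def hperm (ε : Bool) (h : H) : Equiv.Perm (Bool × H) where
  toFun p := (xor p.1 ε, (if ε then p.2⁻¹ else p.2) * h)
  invFun p := (xor p.1 ε, if ε then p.2⁻¹ * h else p.2 * h⁻¹)
  left_inv p := by
    cases ε <;> simp [mul_assoc, mul_comm, mul_left_comm]
  right_inv p := by
    cases ε <;> simp [mul_assoc, mul_comm, mul_left_comm]

lemma hperm_mul (ε₁ ε₂ : Bool) (h₁ h₂ : H) :
    hperm ε₂ h₂ * hperm ε₁ h₁ =
      hperm (xor ε₁ ε₂) ((if ε₂ then h₁⁻¹ else h₁) * h₂) := by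
  apply Equiv.ext
  rintro ⟨i, x⟩
  cases ε₁ <;> cases ε₂ <;>
    simp [hperm, mul_assoc, mul_comm, mul_left_comm]

lemma hperm_inv (ε : Bool) (h : H) :
    (hperm ε h)⁻¹ = hperm ε (if ε then h else h⁻¹) := by
  apply Equiv.ext
  rintro ⟨i, x⟩
  cases ε <;> simp [hperm, Equiv.Perm.inv_def, Equiv.symm]

lemma he1 (x y h : H) : (y * h) * (x * h)⁻¹ = y * x⁻¹ := by group

lemma he2 (x y h : H) : (x⁻¹ * h) * (y⁻¹ * h)⁻¹ = y * x⁻¹ := by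
  rw [mul_inv_rev, inv_inv, mul_assoc, mul_inv_cancel_left, mul_comm]

def haarSubgroup (H : Type*) [CommGroup H] : Subgroup (Equiv.Perm (Bool × H)) where
  carrier := Set.range (fun p : Bool × H => hperm p.1 p.2)
  one_mem' := ⟨(false, 1), by
    apply Equiv.ext; rintro ⟨i, x⟩; simp [hperm]⟩
  mul_mem' := by
    rintro _ _ ⟨⟨ε₂, h₂⟩, rfl⟩ ⟨⟨ε₁, h₁⟩, rfl⟩
    exact ⟨(xor ε₁ ε₂, (if ε₂ then h₁⁻¹ else h₁) * h₂), (hperm_mul ε₁ ε₂ h₁ h₂).symm⟩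
  inv_mem' := by
    rintro _ ⟨⟨ε, h⟩, rfl⟩
    exact ⟨(ε, if ε then h else h⁻¹), (hperm_inv ε h).symm⟩

end

theorem abelian_haar_graphs_are_cayley
    {H : Type*} [CommGroup H] [Finite H] (S : Set H) :
    IsCayleyGraph (haarGraph S) := by
  refine ⟨haarSubgroup H, ?_, ?_⟩
  · rintro g ⟨⟨ε, h⟩, rfl⟩ ⟨i, x⟩ ⟨j, y⟩
    cases ε <;> cases i <;> cases j <;>
      simp only [haarGraph, hperm, Equiv.coe_fn_mk, Bool.xor_false, Bool.xor_true,
        Bool.not_false, Bool.not_true, if_true, if_false, Bool.false_eq_true,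
        Bool.true_eq_false, if_neg, if_pos, he1, he2] <;>
      simp [he1, he2, mul_comm]
  · rintro ⟨i, x⟩ ⟨j, y⟩
    refine ⟨hperm (xor i j) (if xor i j then x * y else x⁻¹ * y),
      ⟨⟨(xor i j, if xor i j then x * y else x⁻¹ * y), rfl⟩, ?_⟩, ?_⟩
    · cases i <;> cases j <;> simp [hperm, mul_comm, mul_assoc]
    · rintro g ⟨⟨⟨ε, h⟩, rfl⟩, hg⟩
      simp only [hperm, Equiv.coe_fn_mk, Prod.mk.injEq] at hg
      obtain ⟨h1, h2⟩ := hg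
      have hε : ε = xor i j := by cases i <;> cases j <;> simp_all
      subst hε
      cases i <;> cases j <;>
        (congr 1; subst h2; simp [mul_comm, mul_assoc, mul_left_comm])
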